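/- Let (B1, B2) be subspaces of F_{N1,2} and F_{N2,2} respectively in the shuffle algebra F = ℚ⟨z3,z5,...⟩, with B1 ∩ B2 = {0}. Then dim_ℚ ⟨ w1 ⧢ w2 : w1 ∈ B1, w2 ∈ B2 ⟩ = dim_ℚ B1 · dim_ℚ B2. -/

import Mathlib

noncomputable section

/-- The shuffle product of two words, as an element of the free `ℚ`-vector space on words. -/
def wordShuffle : List ℕ → List ℕ → (List ℕ →₀ ℚ)
  | [], w => Finsupp.single w 1
  | a :: u, [] => Finsupp.single (a :: u) 1
  | a :: u, b :: v =>
      Finsupp.mapDomain (fun w => a :: w) (wordShuffle u (b :: v)) +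
        Finsupp.mapDomain (fun w => b :: w) (wordShuffle (a :: u) v)
  termination_by u v => u.length + v.length

/-- The shuffle product `⧢` on the shuffle algebra `F = ℚ⟨z3, z5, z7, ...⟩`, whose underlying
vector space is the free `ℚ`-vector space on words (a word `[n1,...,nr]` is `z_{n1}⋯z_{nr}`). -/
def shuffleF (f g : List ℕ →₀ ℚ) : List ℕ →₀ ℚ :=
  f.sum fun u c => g.sum fun v d => (c * d) • wordShuffle u v

/-- The weight `N`, depth `r` graded piece `F_{N,r}` of `F = ℚ⟨z3, z5, ...⟩`: the span of the
words of length `r` in letters `z_n`, `n` odd `≥ 3`, with total weight `N`. -/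
def Fcomp (N r : ℕ) : Submodule ℚ (List ℕ →₀ ℚ) :=
  Submodule.span ℚ {f | ∃ w : List ℕ, f = Finsupp.single w 1 ∧
    w.length = r ∧ w.sum = N ∧ ∀ n ∈ w, Odd n ∧ 3 ≤ n}

/-- Lemma 4.3: if `B1 ⊆ F_{N1,2}` and `B2 ⊆ F_{N2,2}` are subspaces with `B1 ∩ B2 = {0}`, then
the span of the shuffle products `w1 ⧢ w2`, `w1 ∈ B1`, `w2 ∈ B2`, has dimension
`dim B1 · dim B2`. -/
lemma wordShuffle_pair (a b c d : ℕ) :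
    wordShuffle [a,b] [c,d] = Finsupp.single [a,b,c,d] 1 + Finsupp.single [a,c,b,d] 1 +
      Finsupp.single [a,c,d,b] 1 + Finsupp.single [c,a,b,d] 1 + Finsupp.single [c,a,d,b] 1 +
      Finsupp.single [c,d,a,b] 1 := by
  simp only [wordShuffle, Finsupp.mapDomain_add, Finsupp.mapDomain_single]
  abel

def shuffleL : (List ℕ →₀ ℚ) →ₗ[ℚ] (List ℕ →₀ ℚ) →ₗ[ℚ] (List ℕ →₀ ℚ) :=
  Finsupp.lsum ℚ fun u => LinearMap.toSpanSingleton ℚ _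
    (Finsupp.lsum ℚ fun v => LinearMap.toSpanSingleton ℚ (List ℕ →₀ ℚ) (wordShuffle u v))

lemma shuffleF_eq (f g : List ℕ →₀ ℚ) : shuffleF f g = shuffleL f g := by
  rw [shuffleF, shuffleL, Finsupp.lsum_apply, Finsupp.sum, Finsupp.sum, LinearMap.coe_sum,
    Finset.sum_apply]
  refine Finset.sum_congr rfl fun u _ => ?_
  rw [LinearMap.toSpanSingleton_apply, LinearMap.smul_apply, Finsupp.lsum_apply,
    Finsupp.sum, Finsupp.sum, Finset.smul_sum]
  refine Finset.sum_congr rfl fun v _ => ?_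
  rw [LinearMap.toSpanSingleton_apply, mul_smul]

lemma shuffleL_single (u v : List ℕ) :
    shuffleL (Finsupp.single u 1) (Finsupp.single v 1) = wordShuffle u v := by
  rw [← shuffleF_eq, shuffleF, Finsupp.sum_single_index, Finsupp.sum_single_index] <;> simp

section
variable (x y z w p q r s : ℕ)

lemma csplit1 :
    (Finsupp.single ([x,y,z,w] : List ℕ) (1:ℚ)) [p,q,r,s] =
    (Finsupp.single ([x,y] : List ℕ) (1:ℚ)) [p,q] * (Finsupp.single ([z,w] : List ℕ) (1:ℚ)) [r,s] := by
  simp only [Finsupp.single_apply]; split_ifs <;> simp_all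

lemma csplit2 :
    (Finsupp.single ([x,z,y,w] : List ℕ) (1:ℚ)) [p,q,r,s] =
    (Finsupp.single ([x,y] : List ℕ) (1:ℚ)) [p,r] * (Finsupp.single ([z,w] : List ℕ) (1:ℚ)) [q,s] := by
  simp only [Finsupp.single_apply]; split_ifs <;> simp_all

lemma csplit3 :
    (Finsupp.single ([x,z,w,y] : List ℕ) (1:ℚ)) [p,q,r,s] =
    (Finsupp.single ([x,y] : List ℕ) (1:ℚ)) [p,s] * (Finsupp.single ([z,w] : List ℕ) (1:ℚ)) [q,r] := by
  simp only [Finsupp.single_apply]; split_ifs <;> simp_all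

lemma csplit4 :
    (Finsupp.single ([z,x,y,w] : List ℕ) (1:ℚ)) [p,q,r,s] =
    (Finsupp.single ([x,y] : List ℕ) (1:ℚ)) [q,r] * (Finsupp.single ([z,w] : List ℕ) (1:ℚ)) [p,s] := by
  simp only [Finsupp.single_apply]; split_ifs <;> simp_all

lemma csplit5 :
    (Finsupp.single ([z,x,w,y] : List ℕ) (1:ℚ)) [p,q,r,s] =
    (Finsupp.single ([x,y] : List ℕ) (1:ℚ)) [q,s] * (Finsupp.single ([z,w] : List ℕ) (1:ℚ)) [p,r] := by
  simp only [Finsupp.single_apply]; split_ifs <;> simp_all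

lemma csplit6 :
    (Finsupp.single ([z,w,x,y] : List ℕ) (1:ℚ)) [p,q,r,s] =
    (Finsupp.single ([x,y] : List ℕ) (1:ℚ)) [r,s] * (Finsupp.single ([z,w] : List ℕ) (1:ℚ)) [p,q] := by
  simp only [Finsupp.single_apply]; split_ifs <;> simp_all

lemma pair_coeff :
    (wordShuffle [x,y] [z,w]) [p,q,r,s] =
      (Finsupp.single ([x,y] : List ℕ) (1:ℚ)) [p,q] * (Finsupp.single ([z,w] : List ℕ) (1:ℚ)) [r,s]
    + (Finsupp.single ([x,y] : List ℕ) (1:ℚ)) [p,r] * (Finsupp.single ([z,w] : List ℕ) (1:ℚ)) [q,s]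
    + (Finsupp.single ([x,y] : List ℕ) (1:ℚ)) [p,s] * (Finsupp.single ([z,w] : List ℕ) (1:ℚ)) [q,r]
    + (Finsupp.single ([x,y] : List ℕ) (1:ℚ)) [q,r] * (Finsupp.single ([z,w] : List ℕ) (1:ℚ)) [p,s]
    + (Finsupp.single ([x,y] : List ℕ) (1:ℚ)) [q,s] * (Finsupp.single ([z,w] : List ℕ) (1:ℚ)) [p,r]
    + (Finsupp.single ([x,y] : List ℕ) (1:ℚ)) [r,s] * (Finsupp.single ([z,w] : List ℕ) (1:ℚ)) [p,q] := by
  rw [wordShuffle_pair]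
  simp only [Finsupp.add_apply]
  rw [csplit1 x y z w p q r s, csplit2 x y z w p q r s, csplit3 x y z w p q r s,
    csplit4 x y z w p q r s, csplit5 x y z w p q r s, csplit6 x y z w p q r s]
end

abbrev len2 : Set (List ℕ) := {w : List ℕ | w.length = 2}

def wset (N : ℕ) : Set (List ℕ) := {w | w.length = 2 ∧ w.sum = N}

lemma Fcomp_le_supported (N : ℕ) :
    Fcomp N 2 ≤ Finsupp.supported ℚ ℚ (wset N) := by
  refine Submodule.span_le.2 ?_
  rintro f ⟨w, rfl, hlen, hsum, -⟩
  exact Finsupp.single_mem_supported ℚ 1 ⟨hlen, hsum⟩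

lemma wset_le_len2 (N : ℕ) : Finsupp.supported ℚ ℚ (wset N) ≤ Finsupp.supported ℚ ℚ len2 :=
  Finsupp.supported_mono fun w hw => hw.1

lemma wset_finite (N : ℕ) : (wset N).Finite := by
  have : wset N ⊆ (fun p : ℕ × ℕ => [p.1, p.2]) '' (Set.Iic N ×ˢ Set.Iic N) := by
    rintro w ⟨hlen, hsum⟩
    obtain ⟨x, y, rfl⟩ : ∃ x y, w = [x, y] := by
      rcases w with _ | ⟨z, _ | ⟨w', _ | _⟩⟩ <;> simp_all
    refine ⟨(x, y), ⟨?_, ?_⟩, rfl⟩ <;> simp at hsum <;> simp <;> omega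
  exact Set.Finite.subset (((Set.finite_Iic N).prod (Set.finite_Iic N)).image _) this

lemma supported_finiteDimensional (N : ℕ) :
    FiniteDimensional ℚ ↥(Finsupp.supported ℚ ℚ (wset N)) := by
  have : Finite ↥(wset N) := (wset_finite N).to_subtype
  exact Module.Finite.equiv (Finsupp.supportedEquivFinsupp (wset N)).symm

lemma eq_zero_of_supported_pairs {f : List ℕ →₀ ℚ}
    (hf : f ∈ Finsupp.supported ℚ ℚ len2) (h : ∀ a b : ℕ, f [a, b] = 0) : f = 0 := by
  ext w
  rcases w with _ | ⟨a, _ | ⟨b, _ | ⟨c, t⟩⟩⟩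
  · exact (Finsupp.mem_supported' ℚ f).mp hf _ (by simp [len2])
  · exact (Finsupp.mem_supported' ℚ f).mp hf _ (by simp [len2])
  · exact h a b
  · exact (Finsupp.mem_supported' ℚ f).mp hf _ (by simp [len2])
lemma coeff_single_left (x y : ℕ) (p q r s : ℕ) {g : List ℕ →₀ ℚ}
    (hg : g ∈ Finsupp.supported ℚ ℚ len2) :
    (shuffleL (Finsupp.single ([x,y] : List ℕ) (1:ℚ)) g) [p,q,r,s] =
      (Finsupp.single ([x,y] : List ℕ) (1:ℚ)) [p,q] * g [r,s]
    + (Finsupp.single ([x,y] : List ℕ) (1:ℚ)) [p,r] * g [q,s]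
    + (Finsupp.single ([x,y] : List ℕ) (1:ℚ)) [p,s] * g [q,r]
    + (Finsupp.single ([x,y] : List ℕ) (1:ℚ)) [q,r] * g [p,s]
    + (Finsupp.single ([x,y] : List ℕ) (1:ℚ)) [q,s] * g [p,r]
    + (Finsupp.single ([x,y] : List ℕ) (1:ℚ)) [r,s] * g [p,q] := by
  rw [Finsupp.supported_eq_span_single] at hg
  induction hg using Submodule.span_induction with
  | mem g hgmem =>
    obtain ⟨w, hw, rfl⟩ := hgmem
    obtain ⟨z, w', rfl⟩ : ∃ z w', w = [z, w'] := by
      rcases w with _ | ⟨z, _ | ⟨w', _ | _⟩⟩ <;> simp_all [len2]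
    rw [shuffleL_single]
    exact pair_coeff x y z w' p q r s
  | zero => simp
  | add g₁ g₂ _ _ ih₁ ih₂ =>
    simp only [map_add, Finsupp.add_apply, ih₁, ih₂]; ring
  | smul c g' _ ih =>
    simp only [map_smul, Finsupp.smul_apply, ih, smul_eq_mul]; ring

lemma coeff_formula (p q r s : ℕ) {f g : List ℕ →₀ ℚ}
    (hf : f ∈ Finsupp.supported ℚ ℚ len2) (hg : g ∈ Finsupp.supported ℚ ℚ len2) :
    (shuffleL f g) [p,q,r,s] =
      f [p,q] * g [r,s] + f [p,r] * g [q,s] + f [p,s] * g [q,r]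
    + f [q,r] * g [p,s] + f [q,s] * g [p,r] + f [r,s] * g [p,q] := by
  rw [Finsupp.supported_eq_span_single] at hf
  induction hf using Submodule.span_induction with
  | mem f hfmem =>
    obtain ⟨w, hw, rfl⟩ := hfmem
    obtain ⟨x, y, rfl⟩ : ∃ x y, w = [x, y] := by
      rcases w with _ | ⟨z, _ | ⟨w', _ | _⟩⟩ <;> simp_all [len2]
    exact coeff_single_left x y p q r s hg
  | zero => simp
  | add f₁ f₂ _ _ ih₁ ih₂ =>
    simp only [map_add, LinearMap.add_apply, Finsupp.add_apply, ih₁, ih₂]; ring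
  | smul c f' _ ih =>
    simp only [map_smul, LinearMap.smul_apply, Finsupp.smul_apply, ih, smul_eq_mul]; ring
lemma keyAux (N₁ N₂ : ℕ) (H : ℕ → ℕ → ℕ → ℕ → ℚ)
    (hz1 : ∀ x y z w : ℕ, x + y ≠ N₁ → H x y z w = 0)
    (hz2 : ∀ x y z w : ℕ, z + w ≠ N₂ → H x y z w = 0)
    (hE : ∀ p q r s : ℕ, H p q r s + H p r q s + H p s q r + H q r p s + H q s p r + H r s p q = 0)
    (a b c d : ℕ) (hab : a + b = N₁) (hcd : c + d = N₂) :
    H a b c d + H c d a b = 0 := by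
  rcases eq_or_ne a b with heqab | heqab
  · subst heqab
    rcases eq_or_ne a c with heqac | heqac
    · subst heqac
      rcases eq_or_ne a d with heqad | heqad
      · subst heqad
        rcases eq_or_ne N₁ N₂ with hN | hN
        · -- N₁ = N₂
          have e0 := hE a a a a
          linarith
        · -- N₁ ≠ N₂
          omega
      · 
        rcases eq_or_ne N₁ N₂ with hN | hN
        · -- N₁ = N₂
          omega
        · -- N₁ ≠ N₂
          have e0 := hE a a a d
          have z1 : H a d a a = 0 := hz1 a d a a (by omega)
          linarith
    · 
      rcases eq_or_ne a d with heqad | heqad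
      · subst heqad
        rcases eq_or_ne N₁ N₂ with hN | hN
        · -- N₁ = N₂
          omega
        · -- N₁ ≠ N₂
          have e0 := hE a a a c
          have e1 := hE a a c a
          have z2 : H a c a a = 0 := hz1 a c a a (by omega)
          have z3 : H c a a a = 0 := hz1 c a a a (by omega)
          linarith
      · 
        rcases eq_or_ne c d with heqcd | heqcd
        · subst heqcd
          rcases eq_or_ne N₁ N₂ with hN | hN
          · -- N₁ = N₂
            omega
          · -- N₁ ≠ N₂
            have e0 := hE a a c c
            have z1 : H a c a c = 0 := hz1 a c a c (by omega)
            have z2 : H c c a a = 0 := hz1 c c a a (by omega)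
            linarith
        · 
          rcases eq_or_ne N₁ N₂ with hN | hN
          · -- N₁ = N₂
            have e0 := hE a a c d
            have z1 : H a c a d = 0 := hz1 a c a d (by omega)
            have z2 : H a d a c = 0 := hz1 a d a c (by omega)
            linarith
          · -- N₁ ≠ N₂
            have e0 := hE a a c d
            have z1 : H a c a d = 0 := hz1 a c a d (by omega)
            have z2 : H a d a c = 0 := hz1 a d a c (by omega)
            have z3 : H c d a a = 0 := hz1 c d a a (by omega)
            linarith
  · 
    rcases eq_or_ne a c with heqac | heqac
    · subst heqac
      rcases eq_or_ne a d with heqad | heqad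
      · subst heqad
        rcases eq_or_ne N₁ N₂ with hN | hN
        · -- N₁ = N₂
          omega
        · -- N₁ ≠ N₂
          have e0 := hE a a a b
          have z1 : H a a a b = 0 := hz1 a a a b (by omega)
          linarith
      · 
        rcases eq_or_ne b d with heqbd | heqbd
        · subst heqbd
          rcases eq_or_ne N₁ N₂ with hN | hN
          · -- N₁ = N₂
            have e0 := hE a a b b
            have z1 : H a a b b = 0 := hz1 a a b b (by omega)
            have z2 : H b b a a = 0 := hz1 b b a a (by omega)
            linarith
          · -- N₁ ≠ N₂
            omega
        · 
          rcases eq_or_ne N₁ N₂ with hN | hN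
          · -- N₁ = N₂
            omega
          · -- N₁ ≠ N₂
            have e0 := hE a a b d
            have z1 : H a a b d = 0 := hz1 a a b d (by omega)
            have z2 : H a d a b = 0 := hz1 a d a b (by omega)
            have z3 : H b d a a = 0 := hz1 b d a a (by omega)
            linarith
    · 
      rcases eq_or_ne a d with heqad | heqad
      · subst heqad
        rcases eq_or_ne b c with heqbc | heqbc
        · subst heqbc
          rcases eq_or_ne N₁ N₂ with hN | hN
          · -- N₁ = N₂
            have e0 := hE a a b b
            have e1 := hE a b a b
            have z2 : H a a b b = 0 := hz1 a a b b (by omega)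
            have z3 : H b b a a = 0 := hz1 b b a a (by omega)
            linarith
          · -- N₁ ≠ N₂
            omega
        · 
          rcases eq_or_ne N₁ N₂ with hN | hN
          · -- N₁ = N₂
            omega
          · -- N₁ ≠ N₂
            have e0 := hE a a b c
            have e1 := hE a b a c
            have e2 := hE a b c a
            have z3 : H a a b c = 0 := hz1 a a b c (by omega)
            have z4 : H a c a b = 0 := hz1 a c a b (by omega)
            have z5 : H a c b a = 0 := hz1 a c b a (by omega)
            have z6 : H b c a a = 0 := hz1 b c a a (by omega)
            have z7 : H c a a b = 0 := hz1 c a a b (by omega)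
            linarith
      · 
        rcases eq_or_ne b c with heqbc | heqbc
        · subst heqbc
          rcases eq_or_ne b d with heqbd | heqbd
          · subst heqbd
            rcases eq_or_ne N₁ N₂ with hN | hN
            · -- N₁ = N₂
              omega
            · -- N₁ ≠ N₂
              have e0 := hE a b b b
              have z1 : H b b a b = 0 := hz1 b b a b (by omega)
              linarith
          · 
            rcases eq_or_ne N₁ N₂ with hN | hN
            · -- N₁ = N₂
              omega
            · -- N₁ ≠ N₂
              have e0 := hE a b b d
              have z1 : H a d b b = 0 := hz1 a d b b (by omega)
              have z2 : H b b a d = 0 := hz1 b b a d (by omega)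
              have z3 : H b d a b = 0 := hz1 b d a b (by omega)
              linarith
        · 
          rcases eq_or_ne b d with heqbd | heqbd
          · subst heqbd
            rcases eq_or_ne N₁ N₂ with hN | hN
            · -- N₁ = N₂
              omega
            · -- N₁ ≠ N₂
              have e0 := hE a b b c
              have e1 := hE a b c b
              have z2 : H a c b b = 0 := hz1 a c b b (by omega)
              have z3 : H b b a c = 0 := hz1 b b a c (by omega)
              have z4 : H b c a b = 0 := hz1 b c a b (by omega)
              have z5 : H c b a b = 0 := hz1 c b a b (by omega)
              linarith
          · 
            rcases eq_or_ne c d with heqcd | heqcd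
            · subst heqcd
              rcases eq_or_ne N₁ N₂ with hN | hN
              · -- N₁ = N₂
                have e0 := hE a b c c
                have z1 : H a c b c = 0 := hz1 a c b c (by omega)
                have z2 : H b c a c = 0 := hz1 b c a c (by omega)
                linarith
              · -- N₁ ≠ N₂
                have e0 := hE a b c c
                have z1 : H a c b c = 0 := hz1 a c b c (by omega)
                have z2 : H b c a c = 0 := hz1 b c a c (by omega)
                have z3 : H c c a b = 0 := hz1 c c a b (by omega)
                linarith
            · 
              rcases eq_or_ne N₁ N₂ with hN | hN
              · -- N₁ = N₂
                have e0 := hE a b c d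
                have z1 : H a c b d = 0 := hz1 a c b d (by omega)
                have z2 : H a d b c = 0 := hz1 a d b c (by omega)
                have z3 : H b c a d = 0 := hz1 b c a d (by omega)
                have z4 : H b d a c = 0 := hz1 b d a c (by omega)
                linarith
              · -- N₁ ≠ N₂
                have e0 := hE a b c d
                have z1 : H a c b d = 0 := hz1 a c b d (by omega)
                have z2 : H a d b c = 0 := hz1 a d b c (by omega)
                have z3 : H b c a d = 0 := hz1 b c a d (by omega)
                have z4 : H b d a c = 0 := hz1 b d a c (by omega)
                have z5 : H c d a b = 0 := hz1 c d a b (by omega)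
                linarith

lemma keyH (N₁ N₂ : ℕ) (H : ℕ → ℕ → ℕ → ℕ → ℚ)
    (hz1 : ∀ x y z w : ℕ, x + y ≠ N₁ → H x y z w = 0)
    (hz2 : ∀ x y z w : ℕ, z + w ≠ N₂ → H x y z w = 0)
    (hE : ∀ p q r s : ℕ, H p q r s + H p r q s + H p s q r + H q r p s + H q s p r + H r s p q = 0)
    (a b c d : ℕ) : H a b c d + H c d a b = 0 := by
  by_cases h1 : a + b = N₁ ∧ c + d = N₂
  · exact keyAux N₁ N₂ H hz1 hz2 hE a b c d h1.1 h1.2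
  · by_cases h2 : c + d = N₁ ∧ a + b = N₂
    · have := keyAux N₁ N₂ H hz1 hz2 hE c d a b h2.1 h2.2
      linarith
    · have hx : H a b c d = 0 := by
        rcases not_and_or.mp h1 with h | h
        exacts [hz1 _ _ _ _ h, hz2 _ _ _ _ h]
      have hy : H c d a b = 0 := by
        rcases not_and_or.mp h2 with h | h
        exacts [hz1 _ _ _ _ h, hz2 _ _ _ _ h]
      rw [hx, hy, add_zero]


theorem shuffle_product_dimension (N₁ N₂ : ℕ) (B₁ B₂ : Submodule ℚ (List ℕ →₀ ℚ))
    (hB₁ : B₁ ≤ Fcomp N₁ 2) (hB₂ : B₂ ≤ Fcomp N₂ 2) (hdisj : B₁ ⊓ B₂ = ⊥) :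
    Module.finrank ℚ
        (Submodule.span ℚ {f : List ℕ →₀ ℚ | ∃ w₁ ∈ B₁, ∃ w₂ ∈ B₂, f = shuffleF w₁ w₂}) =
      Module.finrank ℚ B₁ * Module.finrank ℚ B₂ := by
  classical
  have hsup1 : B₁ ≤ Finsupp.supported ℚ ℚ (wset N₁) := le_trans hB₁ (Fcomp_le_supported N₁)
  have hsup2 : B₂ ≤ Finsupp.supported ℚ ℚ (wset N₂) := le_trans hB₂ (Fcomp_le_supported N₂)
  have hlen1 : B₁ ≤ Finsupp.supported ℚ ℚ len2 := le_trans hsup1 (wset_le_len2 N₁)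
  have hlen2 : B₂ ≤ Finsupp.supported ℚ ℚ len2 := le_trans hsup2 (wset_le_len2 N₂)
  have hfd1 : FiniteDimensional ℚ ↥B₁ := by
    have := supported_finiteDimensional N₁
    exact Submodule.finiteDimensional_of_le hsup1
  have hfd2 : FiniteDimensional ℚ ↥B₂ := by
    have := supported_finiteDimensional N₂
    exact Submodule.finiteDimensional_of_le hsup2
  set n₁ := Module.finrank ℚ ↥B₁ with hn₁
  set n₂ := Module.finrank ℚ ↥B₂ with hn₂
  let b₁ : Module.Basis (Fin n₁) ℚ ↥B₁ := Module.finBasis ℚ ↥B₁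
  let b₂ : Module.Basis (Fin n₂) ℚ ↥B₂ := Module.finBasis ℚ ↥B₂
  let v : Fin n₁ × Fin n₂ → (List ℕ →₀ ℚ) :=
    fun t => shuffleL (b₁ t.1 : List ℕ →₀ ℚ) (b₂ t.2 : List ℕ →₀ ℚ)
  -- span of basis images
  have hspan1 : Submodule.span ℚ (Set.range fun i => ((b₁ i : ↥B₁) : List ℕ →₀ ℚ)) = B₁ := by
    have : (Set.range fun i => ((b₁ i : ↥B₁) : List ℕ →₀ ℚ)) = B₁.subtype '' Set.range b₁ := by
      rw [← Set.range_comp]; rfl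
    rw [this, ← Submodule.map_span, b₁.span_eq, Submodule.map_subtype_top]
  have hspan2 : Submodule.span ℚ (Set.range fun j => ((b₂ j : ↥B₂) : List ℕ →₀ ℚ)) = B₂ := by
    have : (Set.range fun j => ((b₂ j : ↥B₂) : List ℕ →₀ ℚ)) = B₂.subtype '' Set.range b₂ := by
      rw [← Set.range_comp]; rfl
    rw [this, ← Submodule.map_span, b₂.span_eq, Submodule.map_subtype_top]
  -- the span equality
  have hspan : Submodule.span ℚ {f : List ℕ →₀ ℚ | ∃ w₁ ∈ B₁, ∃ w₂ ∈ B₂, f = shuffleF w₁ w₂} =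
      Submodule.span ℚ (Set.range v) := by
    apply le_antisymm
    · refine Submodule.span_le.2 ?_
      rintro f ⟨w₁, h1, w₂, h2, rfl⟩
      rw [shuffleF_eq]
      have h1' : w₁ ∈ Submodule.span ℚ (Set.range fun i => ((b₁ i : ↥B₁) : List ℕ →₀ ℚ)) := by
        rw [hspan1]; exact h1
      clear h1
      induction h1' using Submodule.span_induction with
      | mem x hx =>
        obtain ⟨i, rfl⟩ := hx
        have h2' : w₂ ∈ Submodule.span ℚ (Set.range fun j => ((b₂ j : ↥B₂) : List ℕ →₀ ℚ)) := by
          rw [hspan2]; exact h2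
        clear h2
        induction h2' using Submodule.span_induction with
        | mem y hy =>
          obtain ⟨j, rfl⟩ := hy
          exact Submodule.subset_span ⟨(i, j), rfl⟩
        | zero => simp only [map_zero]; exact Submodule.zero_mem _
        | add y₁ y₂ _ _ ih₁ ih₂ => simp only [map_add]; exact Submodule.add_mem _ ih₁ ih₂
        | smul c y _ ih => simp only [map_smul]; exact Submodule.smul_mem _ c ih
      | zero => simp only [map_zero, LinearMap.zero_apply]; exact Submodule.zero_mem _
      | add x₁ x₂ _ _ ih₁ ih₂ =>
        simp only [map_add, LinearMap.add_apply]; exact Submodule.add_mem _ ih₁ ih₂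
      | smul c x _ ih =>
        simp only [map_smul, LinearMap.smul_apply]; exact Submodule.smul_mem _ c ih
    · refine Submodule.span_le.2 ?_
      rintro f ⟨t, rfl⟩
      exact Submodule.subset_span
        ⟨(b₁ t.1 : List ℕ →₀ ℚ), (b₁ t.1).2, (b₂ t.2 : List ℕ →₀ ℚ), (b₂ t.2).2,
          (shuffleF_eq _ _).symm⟩
  have hli : LinearIndependent ℚ v := by
    rw [Fintype.linearIndependent_iff]
    intro cco hsum0
    set H : ℕ → ℕ → ℕ → ℕ → ℚ := fun a b c d =>
      ∑ t : Fin n₁ × Fin n₂,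
        cco t * ((b₁ t.1 : List ℕ →₀ ℚ) [a,b]) * ((b₂ t.2 : List ℕ →₀ ℚ) [c,d]) with hHdef
    have hz1 : ∀ x y z w : ℕ, x + y ≠ N₁ → H x y z w = 0 := by
      intro x y z w h
      simp only [hHdef]
      refine Finset.sum_eq_zero fun t _ => ?_
      have h0 : (b₁ t.1 : List ℕ →₀ ℚ) [x,y] = 0 := by
        refine (Finsupp.mem_supported' ℚ _).mp (hsup1 (b₁ t.1).2) _ ?_
        simp only [wset, Set.mem_setOf_eq, List.sum_cons, List.sum_nil, not_and]
        intro _; omega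
      rw [h0]; ring
    have hz2 : ∀ x y z w : ℕ, z + w ≠ N₂ → H x y z w = 0 := by
      intro x y z w h
      simp only [hHdef]
      refine Finset.sum_eq_zero fun t _ => ?_
      have h0 : (b₂ t.2 : List ℕ →₀ ℚ) [z,w] = 0 := by
        refine (Finsupp.mem_supported' ℚ _).mp (hsup2 (b₂ t.2).2) _ ?_
        simp only [wset, Set.mem_setOf_eq, List.sum_cons, List.sum_nil, not_and]
        intro _; omega
      rw [h0]; ring
    have hcoeff : ∀ p q r s : ℕ, (∑ t : Fin n₁ × Fin n₂,
        cco t * ((shuffleL (b₁ t.1 : List ℕ →₀ ℚ)) (b₂ t.2 : List ℕ →₀ ℚ)) [p,q,r,s]) = 0 := by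
      intro p q r s
      have h0 := congrArg (fun f : List ℕ →₀ ℚ => f [p,q,r,s]) hsum0
      simpa [v, Finsupp.coe_finset_sum, Finset.sum_apply, Finsupp.smul_apply,
        smul_eq_mul] using h0
    have hE : ∀ p q r s : ℕ, H p q r s + H p r q s + H p s q r + H q r p s + H q s p r
        + H r s p q = 0 := by
      intro p q r s
      rw [← hcoeff p q r s]
      simp only [hHdef]
      rw [← Finset.sum_add_distrib, ← Finset.sum_add_distrib, ← Finset.sum_add_distrib,
        ← Finset.sum_add_distrib, ← Finset.sum_add_distrib]
      refine Finset.sum_congr rfl fun t _ => ?_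
      rw [coeff_formula p q r s (hlen1 (b₁ t.1).2) (hlen2 (b₂ t.2).2)]
      ring
    have hkey := keyH N₁ N₂ H hz1 hz2 hE
    have hli1 : LinearIndependent ℚ (fun i => ((b₁ i : ↥B₁) : List ℕ →₀ ℚ)) :=
      b₁.linearIndependent.map' B₁.subtype (Submodule.ker_subtype B₁)
    have hli2 : LinearIndependent ℚ (fun j => ((b₂ j : ↥B₂) : List ℕ →₀ ℚ)) :=
      b₂.linearIndependent.map' B₂.subtype (Submodule.ker_subtype B₂)
    have hrow : ∀ (γ δ : ℕ) (i : Fin n₁),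
        (∑ j, cco (i,j) * (b₂ j : List ℕ →₀ ℚ) [γ,δ]) = 0 := by
      intro γ δ
      set Fv := ∑ t : Fin n₁ × Fin n₂,
        (cco t * (b₂ t.2 : List ℕ →₀ ℚ) [γ,δ]) • (b₁ t.1 : List ℕ →₀ ℚ) with hFvdef
      set Gv := ∑ t : Fin n₁ × Fin n₂,
        (cco t * (b₁ t.1 : List ℕ →₀ ℚ) [γ,δ]) • (b₂ t.2 : List ℕ →₀ ℚ) with hGvdef
      have hFvB : Fv ∈ B₁ :=
        Submodule.sum_mem _ fun t _ => Submodule.smul_mem _ _ (b₁ t.1).2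
      have hGvB : Gv ∈ B₂ :=
        Submodule.sum_mem _ fun t _ => Submodule.smul_mem _ _ (b₂ t.2).2
      have hFG : Fv + Gv = 0 := by
        apply eq_zero_of_supported_pairs (Submodule.add_mem _ (hlen1 hFvB) (hlen2 hGvB))
        intro a b
        have h1 : Fv [a,b] = H a b γ δ := by
          simp only [hFvdef, hHdef, Finsupp.coe_finset_sum, Finset.sum_apply,
            Finsupp.smul_apply, smul_eq_mul]
          all_goals exact Finset.sum_congr rfl fun t _ => by ring
        have h2 : Gv [a,b] = H γ δ a b := by
          simp only [hGvdef, hHdef, Finsupp.coe_finset_sum, Finset.sum_apply,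
            Finsupp.smul_apply, smul_eq_mul]
          all_goals exact Finset.sum_congr rfl fun t _ => by ring
        rw [Finsupp.add_apply, h1, h2]
        exact hkey a b γ δ
      have hmem : Fv ∈ B₁ ⊓ B₂ := by
        refine ⟨hFvB, ?_⟩
        have hFneg : Fv = -Gv := eq_neg_of_add_eq_zero_left hFG
        rw [hFneg]
        exact Submodule.neg_mem _ hGvB
      have hFv0 : Fv = 0 := by
        rw [hdisj] at hmem
        simpa using hmem
      have hre : Fv = ∑ i, (∑ j, cco (i,j) * (b₂ j : List ℕ →₀ ℚ) [γ,δ]) •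
          (b₁ i : List ℕ →₀ ℚ) := by
        rw [hFvdef, Fintype.sum_prod_type]
        refine Finset.sum_congr rfl fun i _ => ?_
        rw [Finset.sum_smul]
      exact Fintype.linearIndependent_iff.mp hli1
        (fun i => ∑ j, cco (i,j) * (b₂ j : List ℕ →₀ ℚ) [γ,δ]) (by rw [← hre]; exact hFv0)
    intro t
    obtain ⟨i, j⟩ := t
    have hGi : (∑ j' : Fin n₂, cco (i,j') • ((b₂ j' : ↥B₂) : List ℕ →₀ ℚ)) = 0 := by
      apply eq_zero_of_supported_pairs
        (hlen2 (Submodule.sum_mem _ fun j' _ => Submodule.smul_mem _ _ (b₂ j').2))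
      intro a b
      have := hrow a b i
      simpa [Finsupp.coe_finset_sum, Finset.sum_apply, Finsupp.smul_apply, smul_eq_mul]
        using this
    exact Fintype.linearIndependent_iff.mp hli2 (fun j' => cco (i,j')) hGi j
  rw [hspan, finrank_span_eq_card hli, Fintype.card_prod, Fintype.card_fin, Fintype.card_fin]
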